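/- ENS as a function of islacks: ENS = Σ_{i ∈ V} l̃_i F_i, where F_i are the islacks and l̃_i the downstream loads. -/

import Mathlib

open scoped Classical BigOperators

/-- A finite arborescence: every node has a parent, the root is its own parent,
and every node reaches the root by iterating `parent`.  The arcs of the tree are
the pairs `(parent j, j)` for non-root `j`. -/
structure Arbor (V : Type*) where
  root : V
  parent : V → V
  parent_root : parent root = root
  reaches_root : ∀ v : V, ∃ n : ℕ, parent^[n] v = root

variable {V : Type*}

/-- `T.desc j i` : node `i` belongs to the subtree rooted at `j`
(equivalently, `j` lies on the directed path from the root to `i`). -/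
def Arbor.desc (T : Arbor V) (j i : V) : Prop := ∃ n : ℕ, T.parent^[n] i = j

/-- The children of node `i`. -/
noncomputable def Arbor.children [Fintype V] (T : Arbor V) (i : V) : Finset V :=
  Finset.univ.filter fun j => j ≠ T.root ∧ T.parent j = i

/-- The subtree rooted at `j`, as a finset (the set `V_j`). -/
noncomputable def Arbor.subtree [Fintype V] (T : Arbor V) (j : V) : Finset V :=
  Finset.univ.filter fun i => T.desc j i

/-- The node set of the unique directed path from the root to `j` (the set `path(0,j)`). -/
noncomputable def Arbor.pathSet [Fintype V] (T : Arbor V) (j : V) : Finset V :=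
  Finset.univ.filter fun i => T.desc i j

/-- The arcs of the tree, each arc `(parent j, j)` identified with its head `j ≠ root`. -/
noncomputable def Arbor.arcs [Fintype V] (T : Arbor V) : Finset V :=
  Finset.univ.filter fun j => j ≠ T.root


lemma Arbor.eq_root_of_periodic (T : Arbor V) {j : V} {m : ℕ}
    (h : T.parent^[m + 1] j = j) : j = T.root := by
  obtain ⟨n, hn⟩ := T.reaches_root j
  have hk : ∀ k, T.parent^[(m + 1) * k] j = j := by
    intro k
    induction k with
    | zero => simp
    | succ k ih =>
        rw [Nat.mul_succ, Function.iterate_add_apply, h, ih]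
  have key : T.parent^[(m + 1) * n] j = T.root := by
    have : (m + 1) * n = m * n + n := by ring
    rw [this, Function.iterate_add_apply, hn, Function.iterate_fixed T.parent_root]
  rw [hk n] at key
  exact key

lemma Arbor.pathSet_root [Fintype V] (T : Arbor V) :
    T.pathSet T.root = {T.root} := by
  ext a
  simp only [Arbor.pathSet, Finset.mem_filter, Finset.mem_univ, true_and,
    Finset.mem_singleton]
  simp only [Arbor.desc]
  constructor
  · rintro ⟨k, hk⟩
    rw [Function.iterate_fixed T.parent_root] at hk
    exact hk.symm
  · rintro rfl; exact ⟨0, rfl⟩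

lemma Arbor.pathSet_eq_insert [Fintype V] (T : Arbor V) {i : V} (h : i ≠ T.root) :
    T.pathSet i = insert i (T.pathSet (T.parent i)) := by
  ext a
  simp only [Arbor.pathSet, Finset.mem_filter, Finset.mem_univ, true_and,
    Finset.mem_insert]
  simp only [Arbor.desc]
  constructor
  · rintro ⟨k, hk⟩
    cases k with
    | zero => exact Or.inl hk.symm
    | succ k =>
        right
        exact ⟨k, by rw [← Function.iterate_succ_apply]; exact hk⟩
  · rintro (rfl | ⟨k, hk⟩)
    · exact ⟨0, rfl⟩
    · exact ⟨k + 1, by rw [Function.iterate_succ_apply]; exact hk⟩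

lemma Arbor.not_mem_pathSet_parent [Fintype V] (T : Arbor V) {i : V} (h : i ≠ T.root) :
    i ∉ T.pathSet (T.parent i) := by
  intro hmem
  simp only [Arbor.pathSet, Finset.mem_filter, Finset.mem_univ, true_and] at hmem
  simp only [Arbor.desc] at hmem
  obtain ⟨k, hk⟩ := hmem
  exact h (T.eq_root_of_periodic (m := k)
    (by rw [Function.iterate_succ_apply]; exact hk))

/-- ENS as a function of islacks: `ENS = Σ_i l̃_i F_i`. -/
theorem ENS_eq_islack_sum [Fintype V] (T : Arbor V) (As : V → Prop)
    (l lt θ θt u F : V → ℝ)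
    (hl : ∀ i, 0 ≤ l i)
    (hlt : ∀ i, lt i = ∑ j ∈ T.subtree i, l j)
    (hθ : ∀ i, 0 ≤ θ i)
    (hrec : ∀ i, θt i = θ i + ∑ j ∈ (T.children i).filter (fun j => ¬ As j), θt j)
    (hu0 : u T.root = θt T.root)
    (hu : ∀ j, j ≠ T.root → u j = u (T.parent j) + (if As j then θt j else 0))
    (hFroot : F T.root = θt T.root)
    (hF : ∀ j, j ≠ T.root → F j = if As j then θt j else 0) :
    ∑ i, l i * u i = ∑ i, lt i * F i := by
  have hpath : ∀ n (i : V), T.parent^[n] i = T.root → u i = ∑ j ∈ T.pathSet i, F j := by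
    intro n
    induction n with
    | zero =>
        intro i hi
        simp only [Function.iterate_zero, id_eq] at hi
        subst hi
        rw [T.pathSet_root, Finset.sum_singleton, hFroot, hu0]
    | succ n ih =>
        intro i hi
        by_cases h : i = T.root
        · subst h
          rw [T.pathSet_root, Finset.sum_singleton, hFroot, hu0]
        · have hp : T.parent^[n] (T.parent i) = T.root := by
            rw [← Function.iterate_succ_apply]; exact hi
          rw [T.pathSet_eq_insert h, Finset.sum_insert (T.not_mem_pathSet_parent h),
            hu i h, ih _ hp, hF i h]
          ring
  have hu' : ∀ i, u i = ∑ j ∈ T.pathSet i, F j := fun i => by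
    obtain ⟨n, hn⟩ := T.reaches_root i
    exact hpath n i hn
  calc ∑ i, l i * u i
      = ∑ i, ∑ j, if T.desc j i then l i * F j else 0 := by
        refine Finset.sum_congr rfl fun i _ => ?_
        rw [hu' i, Finset.mul_sum, Arbor.pathSet, Finset.sum_filter]
    _ = ∑ j, ∑ i, if T.desc j i then l i * F j else 0 := Finset.sum_comm
    _ = ∑ j, lt j * F j := by
        refine Finset.sum_congr rfl fun j _ => ?_
        rw [← Finset.sum_filter, ← Arbor.subtree, hlt, Finset.sum_mul]
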